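/- Let X, Y, Z be Banach spaces, let T : X → Y be a continuous linear map, and let K : X → Z be a compact linear operator. Suppose there is a constant C > 0 such that ‖x‖_X ≤ C (‖T x‖_Y + ‖K x‖_Z) for all x ∈ X. Then the kernel of T is finite-dimensional and the range of T is closed in Y; that is, T is semi-Fredholm. -/

import Mathlib

/-!
STATEMENT 1: If `T : X → Y` is continuous linear, `K : X → Z` is a compact operator, and
`‖x‖ ≤ C (‖T x‖ + ‖K x‖)` for all `x` with `C > 0`, then `T` is semi-Fredholm:
its kernel is finite-dimensional and its range is closed.
-/

open Metric Filter Topology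

/-- Key auxiliary fact: under the estimate, any bounded sequence whose `T`-images form a
Cauchy sequence has a convergent subsequence. -/
private lemma aux_subseq
    {X Y Z : Type*} [NormedAddCommGroup X] [NormedSpace ℝ X] [CompleteSpace X]
    [NormedAddCommGroup Y] [NormedSpace ℝ Y]
    [NormedAddCommGroup Z] [NormedSpace ℝ Z]
    (T : X →L[ℝ] Y) (K : X →L[ℝ] Z) (hK : IsCompactOperator K)
    (C : ℝ) (hC : 0 < C) (hest : ∀ x : X, ‖x‖ ≤ C * (‖T x‖ + ‖K x‖))
    (u : ℕ → X) (R : ℝ) (hu : ∀ n, ‖u n‖ ≤ R) (hT : CauchySeq (T ∘ u)) :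
    ∃ φ : ℕ → ℕ, StrictMono φ ∧ ∃ x : X, Tendsto (u ∘ φ) atTop (𝓝 x) := by
  obtain ⟨S, hScomp, hSsub⟩ :=
    IsCompactOperator.image_closedBall_subset_compact (f := (K : X →ₗ[ℝ] Z)) hK R
  have hmem : ∀ n, K (u n) ∈ S := fun n =>
    hSsub ⟨u n, by simpa [Metric.mem_closedBall, dist_eq_norm] using hu n, rfl⟩
  obtain ⟨z, -, φ, hφ, hconv⟩ := hScomp.tendsto_subseq hmem
  refine ⟨φ, hφ, ?_⟩
  have hKc : CauchySeq (fun n => K (u (φ n))) := hconv.cauchySeq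
  have hTc : CauchySeq (fun n => T (u (φ n))) := hT.comp_tendsto hφ.tendsto_atTop
  have hcauchy : CauchySeq (u ∘ φ) := by
    rw [Metric.cauchySeq_iff] at hKc hTc ⊢
    intro ε hε
    have hε3 : 0 < ε / (3 * C) := by positivity
    obtain ⟨N₁, hN₁⟩ := hTc _ hε3
    obtain ⟨N₂, hN₂⟩ := hKc _ hε3
    refine ⟨max N₁ N₂, fun m hm n hn => ?_⟩
    have h1 := hN₁ m (le_trans (le_max_left _ _) hm) n (le_trans (le_max_left _ _) hn)
    have h2 := hN₂ m (le_trans (le_max_right _ _) hm) n (le_trans (le_max_right _ _) hn)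
    rw [dist_eq_norm] at h1 h2 ⊢
    have heq : C * (ε / (3 * C) + ε / (3 * C)) = 2 * ε / 3 := by
      field_simp
      ring
    calc ‖(u ∘ φ) m - (u ∘ φ) n‖
        ≤ C * (‖T ((u ∘ φ) m - (u ∘ φ) n)‖ + ‖K ((u ∘ φ) m - (u ∘ φ) n)‖) := hest _
      _ = C * (‖T (u (φ m)) - T (u (φ n))‖ + ‖K (u (φ m)) - K (u (φ n))‖) := by
          simp [map_sub, Function.comp]
      _ < C * (ε / (3 * C) + ε / (3 * C)) :=
          mul_lt_mul_of_pos_left (add_lt_add h1 h2) hC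
      _ = 2 * ε / 3 := heq
      _ < ε := by linarith
  exact cauchySeq_tendsto_of_complete hcauchy

theorem semiFredholm_of_estimate_with_compact
    {X Y Z : Type*} [NormedAddCommGroup X] [NormedSpace ℝ X] [CompleteSpace X]
    [NormedAddCommGroup Y] [NormedSpace ℝ Y] [CompleteSpace Y]
    [NormedAddCommGroup Z] [NormedSpace ℝ Z] [CompleteSpace Z]
    (T : X →L[ℝ] Y) (K : X →L[ℝ] Z) (hK : IsCompactOperator K)
    (C : ℝ) (hC : 0 < C) (hest : ∀ x : X, ‖x‖ ≤ C * (‖T x‖ + ‖K x‖)) :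
    FiniteDimensional ℝ (LinearMap.ker (T : X →ₗ[ℝ] Y)) ∧ IsClosed (LinearMap.range (T : X →ₗ[ℝ] Y) : Set Y) := by
  have hker_closed : IsClosed ((LinearMap.ker (T : X →ₗ[ℝ] Y) : Submodule ℝ X) : Set X) :=
    ContinuousLinearMap.isClosed_ker T
  constructor
  · -- finite-dimensional kernel via Riesz
    apply FiniteDimensional.of_isCompact_closedBall₀ ℝ (r := 1) one_pos
    apply IsSeqCompact.isCompact
    intro u hu
    have hbd : ∀ n, ‖((u n : X))‖ ≤ 1 := by
      intro n
      have := hu n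
      rw [Metric.mem_closedBall, dist_zero_right] at this
      simpa using this
    have hTzero : ∀ n, T ((u n : X)) = 0 := fun n => (u n).2
    have hTc : CauchySeq (T ∘ fun n => (u n : X)) := by
      have : (T ∘ fun n => (u n : X)) = fun _ => (0 : Y) := by
        funext n; simp [Function.comp, hTzero n]
      rw [this]; exact cauchySeq_const 0
    obtain ⟨φ, hφ, x, hx⟩ := aux_subseq T K hK C hC hest (fun n => (u n : X)) 1 hbd hTc
    have hxmem : x ∈ LinearMap.ker (T : X →ₗ[ℝ] Y) := by
      have : ∀ n, ((fun n => (u n : X)) ∘ φ) n ∈ ((LinearMap.ker (T : X →ₗ[ℝ] Y) : Submodule ℝ X) : Set X) :=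
        fun n => (u (φ n)).2
      exact hker_closed.mem_of_tendsto hx (Eventually.of_forall this)
    refine ⟨⟨x, hxmem⟩, ?_, φ, hφ, ?_⟩
    · rw [Metric.mem_closedBall, dist_zero_right]
      have hn : Tendsto (fun n => ‖((fun n => (u n : X)) ∘ φ) n‖) atTop (𝓝 ‖x‖) :=
        (continuous_norm.tendsto x).comp hx
      have hle : ∀ n, ‖((fun n => (u n : X)) ∘ φ) n‖ ≤ 1 := fun n => hbd (φ n)
      have hxle : ‖x‖ ≤ 1 := le_of_tendsto hn (Eventually.of_forall hle)
      simpa using hxle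
    · rw [tendsto_subtype_rng]
      exact hx
  · -- closed range via quotient and a uniform lower bound
    set S : Submodule ℝ X := LinearMap.ker (T : X →ₗ[ℝ] Y) with hS
    -- key estimate: the quotient norm is controlled by ‖T x‖
    have key : ∃ c : ℝ, 0 < c ∧ ∀ x : X, ‖(Submodule.Quotient.mk x : X ⧸ S)‖ ≤ c * ‖T x‖ := by
      by_contra h
      push_neg at h
      have hx : ∀ n : ℕ, ∃ x : X,
          ((n : ℝ) + 1) * ‖T x‖ < ‖(Submodule.Quotient.mk x : X ⧸ S)‖ := by
        intro n
        obtain ⟨x, hx⟩ := h ((n : ℝ) + 1) (by positivity)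
        exact ⟨x, hx⟩
      choose x hxe using hx
      have hpos : ∀ n, 0 < ‖(Submodule.Quotient.mk (x n) : X ⧸ S)‖ := fun n =>
        lt_of_le_of_lt (by positivity) (hxe n)
      -- choose good representatives
      have hrep : ∀ n : ℕ, ∃ m : X,
          (Submodule.Quotient.mk m : X ⧸ S) = Submodule.Quotient.mk (x n) ∧
          ‖m‖ < ‖(Submodule.Quotient.mk (x n) : X ⧸ S)‖ +
            ‖(Submodule.Quotient.mk (x n) : X ⧸ S)‖ :=
        fun n => Submodule.Quotient.norm_mk_lt (Submodule.Quotient.mk (x n)) (hpos n)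
      choose m hm hmnorm using hrep
      set u : ℕ → X := fun n => (‖(Submodule.Quotient.mk (x n) : X ⧸ S)‖)⁻¹ • m n with hu
      have hTm : ∀ n, T (m n) = T (x n) := by
        intro n
        have hmem : m n - x n ∈ S := (Submodule.Quotient.eq S).mp (hm n)
        have h0 : T (m n - x n) = 0 := hmem
        rw [map_sub, sub_eq_zero] at h0
        exact h0
      have hub : ∀ n, ‖u n‖ ≤ 2 := by
        intro n
        rw [hu]
        simp only [norm_smul, norm_inv, norm_norm]
        rw [inv_mul_le_iff₀ (hpos n)]
        calc ‖m n‖ ≤ ‖(Submodule.Quotient.mk (x n) : X ⧸ S)‖ +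
              ‖(Submodule.Quotient.mk (x n) : X ⧸ S)‖ := (hmnorm n).le
          _ = ‖(Submodule.Quotient.mk (x n) : X ⧸ S)‖ * 2 := by ring
      have hTu : ∀ n, ‖T (u n)‖ ≤ 1 / ((n : ℝ) + 1) := by
        intro n
        rw [hu]
        simp only [map_smul, norm_smul, norm_inv, norm_norm, hTm n]
        rw [inv_mul_le_iff₀ (hpos n), mul_one_div, le_div_iff₀ (by positivity)]
        nlinarith [(hxe n).le]
      have hTtend : Tendsto (fun n => T (u n)) atTop (𝓝 0) := by
        rw [tendsto_zero_iff_norm_tendsto_zero]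
        exact squeeze_zero (fun n => norm_nonneg _) hTu
          tendsto_one_div_add_atTop_nhds_zero_nat
      have hTcauchy : CauchySeq (T ∘ u) := hTtend.cauchySeq
      obtain ⟨φ, hφ, w, hw⟩ := aux_subseq T K hK C hC hest u 2 hub hTcauchy
      -- the limit lies in the kernel
      have hTw : T w = 0 := by
        have h1 : Tendsto (fun n => T (u (φ n))) atTop (𝓝 (T w)) :=
          (T.continuous.tendsto w).comp hw
        have h2 : Tendsto (fun n => T (u (φ n))) atTop (𝓝 0) :=
          hTtend.comp hφ.tendsto_atTop
        exact tendsto_nhds_unique h1 h2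
      have hmkw : (Submodule.Quotient.mk w : X ⧸ S) = 0 :=
        (Submodule.Quotient.mk_eq_zero S).mpr hTw
      -- but ‖mk (u n)‖ = 1 for all n
      have hmku : ∀ n, ‖(Submodule.Quotient.mk (u n) : X ⧸ S)‖ = 1 := by
        intro n
        rw [hu]
        have : (Submodule.Quotient.mk ((‖(Submodule.Quotient.mk (x n) : X ⧸ S)‖)⁻¹ • m n)
            : X ⧸ S) = (‖(Submodule.Quotient.mk (x n) : X ⧸ S)‖)⁻¹ •
              (Submodule.Quotient.mk (m n) : X ⧸ S) := by
          rw [Submodule.Quotient.mk_smul]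
        rw [this, hm n, norm_smul, norm_inv, norm_norm, inv_mul_cancel₀ (hpos n).ne']
      -- mk is 1-Lipschitz, hence continuous
      have hmk_lip : LipschitzWith 1 (fun y : X => (Submodule.Quotient.mk y : X ⧸ S)) := by
        have := AddMonoidHomClass.lipschitz_of_bound (S.mkQ) 1
          (fun y => by simpa using Submodule.Quotient.norm_mk_le S y)
        rw [Real.toNNReal_one] at this
        exact this
      have hmk_tend : Tendsto (fun n => (Submodule.Quotient.mk (u (φ n)) : X ⧸ S)) atTop
          (𝓝 (Submodule.Quotient.mk w : X ⧸ S)) :=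
        (hmk_lip.continuous.tendsto w).comp hw
      have hnorm_tend : Tendsto (fun n => ‖(Submodule.Quotient.mk (u (φ n)) : X ⧸ S)‖) atTop
          (𝓝 ‖(Submodule.Quotient.mk w : X ⧸ S)‖) :=
        (continuous_norm.tendsto _).comp hmk_tend
      have hconst : Tendsto (fun n => ‖(Submodule.Quotient.mk (u (φ n)) : X ⧸ S)‖) atTop
          (𝓝 1) := by
        have : (fun n => ‖(Submodule.Quotient.mk (u (φ n)) : X ⧸ S)‖) = fun _ => (1 : ℝ) := by
          funext n; exact hmku (φ n)
        rw [this]; exact tendsto_const_nhds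
      have h10 : (1 : ℝ) = ‖(Submodule.Quotient.mk w : X ⧸ S)‖ :=
        tendsto_nhds_unique hconst hnorm_tend
      rw [hmkw, norm_zero] at h10
      exact one_ne_zero h10
    obtain ⟨c, hc, hkey⟩ := key
    -- lift T to the quotient
    let g : (X ⧸ S) →ₗ[ℝ] Y := S.liftQ (T : X →ₗ[ℝ] Y) le_rfl
    have hg : ∀ x : X, g (Submodule.Quotient.mk x) = T x := fun x => rfl
    have hanti : AntilipschitzWith c.toNNReal g := by
      apply AddMonoidHomClass.antilipschitz_of_bound g
      intro q
      obtain ⟨x, rfl⟩ := Submodule.Quotient.mk_surjective S q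
      rw [hg, Real.coe_toNNReal c hc.le]
      exact hkey x
    have hgbound : ∀ q : X ⧸ S, ‖g q‖ ≤ (‖T‖ + 1) * ‖q‖ := by
      intro q
      apply le_of_forall_pos_le_add
      intro δ hδ
      have hT1 : (0 : ℝ) < ‖T‖ + 1 := by positivity
      have hε : 0 < δ / (‖T‖ + 1) := by positivity
      obtain ⟨a, ha, hanorm⟩ := Submodule.Quotient.norm_mk_lt q hε
      calc ‖g q‖ = ‖T a‖ := by rw [← ha, hg]
        _ ≤ ‖T‖ * ‖a‖ := T.le_opNorm a
        _ ≤ (‖T‖ + 1) * ‖a‖ := by nlinarith [norm_nonneg a]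
        _ ≤ (‖T‖ + 1) * (‖q‖ + δ / (‖T‖ + 1)) := by nlinarith
        _ = (‖T‖ + 1) * ‖q‖ + δ := by field_simp
    have hglip : LipschitzWith (‖T‖ + 1).toNNReal g :=
      AddMonoidHomClass.lipschitz_of_bound g (‖T‖ + 1) hgbound
    have hclosed : IsClosed (Set.range g) := hanti.isClosed_range hglip.uniformContinuous
    have hrange : Set.range ⇑g = (LinearMap.range (T : X →ₗ[ℝ] Y) : Set Y) := by
      ext y
      constructor
      · rintro ⟨q, rfl⟩
        obtain ⟨x, rfl⟩ := Submodule.Quotient.mk_surjective S q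
        exact ⟨x, (hg x).symm⟩
      · rintro ⟨x, rfl⟩
        exact ⟨Submodule.Quotient.mk x, hg x⟩
    rw [← hrange]
    exact hclosed
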